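/- If X is a reflexive real Banach space and C ⊆ X is a nonempty closed set, then Ω(C) = L(C). -/

import Mathlib

open Metric Filter Topology

/-- A real normed space is reflexive if the canonical embedding into its double dual
is surjective. -/
def IsReflexiveSpace (X : Type*) [NormedAddCommGroup X] [NormedSpace ℝ X] : Prop :=
  Function.Surjective (NormedSpace.inclusionInDoubleDual ℝ X)

/-- The set `L_n(C)` of Borwein–Fitzpatrick: points `x ∉ C` for which there is a norm-one
functional `x*` with `sup_{δ>0} inf_{z ∈ C ∩ B(x, d_C(x)+δ)} x*(x-z) > (1 - 2^{-n}) d_C(x)`. -/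
def LSet {X : Type*} [NormedAddCommGroup X] [NormedSpace ℝ X] (C : Set X) (n : ℕ) : Set X :=
  {x | x ∉ C ∧ ∃ f : X →L[ℝ] ℝ, ‖f‖ = 1 ∧
    (⨆ δ : {δ : ℝ // 0 < δ},
        sInf ((fun z => f (x - z)) '' (C ∩ Metric.closedBall x (Metric.infDist x C + δ.1))))
      > (1 - (2 : ℝ) ^ (-(n : ℤ))) * Metric.infDist x C}

/-- The set `Ω(C)`: points `x ∉ C` for which there is a norm-one functional `x*` such that
for every `ε > 0` there is `δ > 0` with
`inf_{z ∈ C ∩ B(x, d_C(x)+δ)} x*(x-z) > (1-ε) d_C(x)`. -/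
def OmegaSet {X : Type*} [NormedAddCommGroup X] [NormedSpace ℝ X] (C : Set X) : Set X :=
  {x | x ∉ C ∧ ∃ f : X →L[ℝ] ℝ, ‖f‖ = 1 ∧ ∀ ε > (0 : ℝ), ∃ δ > (0 : ℝ),
    sInf ((fun z => f (x - z)) '' (C ∩ Metric.closedBall x (Metric.infDist x C + δ)))
      > (1 - ε) * Metric.infDist x C}

section Aux

variable {X : Type*} [NormedAddCommGroup X] [NormedSpace ℝ X]

/-- The image of `z ↦ f (x - z)` on a set inside a closed ball is bounded below. -/
lemma aux_bddBelow (f : X →L[ℝ] ℝ) (x : X) (s : Set X) (r : ℝ) :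
    BddBelow ((fun z => f (x - z)) '' (s ∩ Metric.closedBall x r)) := by
  refine ⟨-(‖f‖ * r), ?_⟩
  rintro y ⟨z, ⟨-, hz⟩, rfl⟩
  rw [Metric.mem_closedBall] at hz
  have h1 : ‖x - z‖ ≤ r := by rw [← dist_eq_norm, dist_comm]; exact hz
  have habs : |f (x - z)| ≤ ‖f‖ * r := by
    calc |f (x - z)| = ‖f (x - z)‖ := rfl
      _ ≤ ‖f‖ * ‖x - z‖ := f.le_opNorm _
      _ ≤ ‖f‖ * r := mul_le_mul_of_nonneg_left h1 (norm_nonneg f)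
  linarith [(abs_le.1 habs).1]

lemma aux_exists {C : Set X} (hCne : C.Nonempty) (x : X) {δ : ℝ} (hδ : 0 < δ) :
    ∃ z ∈ C ∩ Metric.closedBall x (Metric.infDist x C + δ),
      dist x z ≤ Metric.infDist x C + min δ 1 := by
  have hlt : Metric.infDist x C < Metric.infDist x C + min δ 1 :=
    lt_add_of_pos_right _ (lt_min hδ one_pos)
  obtain ⟨z, hzC, hz⟩ := (Metric.infDist_lt_iff hCne).1 hlt
  refine ⟨z, ⟨hzC, ?_⟩, hz.le⟩
  rw [Metric.mem_closedBall, dist_comm]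
  exact hz.le.trans (by linarith [min_le_left δ 1])

lemma aux_nonempty {C : Set X} (hCne : C.Nonempty) (f : X →L[ℝ] ℝ) (x : X) {δ : ℝ} (hδ : 0 < δ) :
    ((fun z => f (x - z)) '' (C ∩ Metric.closedBall x (Metric.infDist x C + δ))).Nonempty := by
  obtain ⟨z, hz, -⟩ := aux_exists hCne x hδ
  exact ⟨_, z, hz, rfl⟩

lemma aux_sInf_le {C : Set X} (hCne : C.Nonempty) (f : X →L[ℝ] ℝ) (hf : ‖f‖ = 1) (x : X)
    {δ : ℝ} (hδ : 0 < δ) :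
    sInf ((fun z => f (x - z)) '' (C ∩ Metric.closedBall x (Metric.infDist x C + δ)))
      ≤ Metric.infDist x C + 1 := by
  obtain ⟨z, hz, hdist⟩ := aux_exists hCne x hδ
  refine (csInf_le (aux_bddBelow f x C _) ⟨z, hz, rfl⟩).trans ?_
  calc f (x - z) ≤ |f (x - z)| := le_abs_self _
    _ ≤ ‖f‖ * ‖x - z‖ := f.le_opNorm _
    _ = ‖x - z‖ := by rw [hf, one_mul]
    _ = dist x z := (dist_eq_norm x z).symm
    _ ≤ Metric.infDist x C + 1 := hdist.trans (by linarith [min_le_right δ 1])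

/-- Key compactness lemma (Banach–Alaoglu in the bidual): given a family of nonempty
subsets `U i ⊆ closedBall x (d + i)` for `i ∈ (0,1]`, monotone in `i`, there is a point of
the bidual lying in all the weak-star closures of the images, of norm at most `d`. -/
lemma aux_nested (x : X) (d : ℝ)
    (U : {p : ℝ // 0 < p ∧ p ≤ 1} → Set X)
    (hmono : ∀ i j, i.1 ≤ j.1 → U i ⊆ U j)
    (hb : ∀ i, ∀ z ∈ U i, dist z x ≤ d + i.1)
    (hne : ∀ i, (U i).Nonempty) :
    ∃ ξ : WeakDual ℝ (StrongDual ℝ X),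
      (∀ i, ξ ∈ closure
        ((fun z => StrongDual.toWeakDual
            (NormedSpace.inclusionInDoubleDual ℝ X (x - z))) '' U i)) ∧
      ‖WeakDual.toStrongDual ξ‖ ≤ d := by
  haveI : Nonempty {p : ℝ // 0 < p ∧ p ≤ 1} := ⟨⟨1, one_pos, le_rfl⟩⟩
  set φ : X → WeakDual ℝ (StrongDual ℝ X) := fun v =>
    StrongDual.toWeakDual (NormedSpace.inclusionInDoubleDual ℝ X v) with hφ
  have hφnorm : ∀ v : X, ‖WeakDual.toStrongDual (φ v)‖ = ‖v‖ := fun v =>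
    (NormedSpace.inclusionInDoubleDualLi ℝ (E := X)).norm_map v
  set T : {p : ℝ // 0 < p ∧ p ≤ 1} → Set (WeakDual ℝ (StrongDual ℝ X)) :=
    fun i => closure ((fun z => φ (x - z)) '' U i) with hT
  have hTsub : ∀ i, T i ⊆ WeakDual.toStrongDual ⁻¹' Metric.closedBall 0 (d + i.1) := by
    intro i
    refine closure_minimal ?_ (WeakDual.isClosed_closedBall 0 _)
    rintro - ⟨z, hz, rfl⟩
    simp only [Set.mem_preimage, mem_closedBall_zero_iff]
    refine (mem_closedBall_zero_iff (a := WeakDual.toStrongDual (φ (x - z))) (r := d + i.1)).mpr ?_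
    rw [hφnorm, ← dist_eq_norm, dist_comm]
    exact hb i z hz
  have hTcl : ∀ i, IsClosed (T i) := fun i => isClosed_closure
  have hTne : ∀ i, (T i).Nonempty := fun i => by
    obtain ⟨z, hz⟩ := hne i
    exact ⟨φ (x - z), subset_closure ⟨z, hz, rfl⟩⟩
  have hTcomp : ∀ i, IsCompact (T i) := fun i =>
    (WeakDual.isCompact_closedBall (𝕜 := ℝ) 0 (d + i.1)).of_isClosed_subset (hTcl i) (hTsub i)
  have hTmono : ∀ i j, i.1 ≤ j.1 → T i ⊆ T j := fun i j hij =>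
    closure_mono (Set.image_mono (hmono i j hij))
  have hdir : Directed (· ⊇ ·) T := by
    intro i j
    refine ⟨⟨min i.1 j.1, lt_min i.2.1 j.2.1, (min_le_left _ _).trans i.2.2⟩, ?_, ?_⟩
    · exact hTmono _ _ (min_le_left _ _)
    · exact hTmono _ _ (min_le_right _ _)
  obtain ⟨ξ, hξ⟩ := IsCompact.nonempty_iInter_of_directed_nonempty_isCompact_isClosed
    T hdir hTne hTcomp hTcl
  rw [Set.mem_iInter] at hξ
  refine ⟨ξ, hξ, ?_⟩
  have hub : ∀ i : {p : ℝ // 0 < p ∧ p ≤ 1}, ‖WeakDual.toStrongDual ξ‖ ≤ d + i.1 := by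
    intro i
    have := hTsub i (hξ i)
    exact (mem_closedBall_zero_iff (a := WeakDual.toStrongDual ξ) (r := d + i.1)).mp this
  refine le_of_forall_pos_le_add fun ε hε => ?_
  have := hub ⟨min ε 1, lt_min hε one_pos, min_le_right _ _⟩
  exact this.trans (by simp only []; linarith [min_le_left ε 1])

/-- If `ξ` is in the weak-star closure of the image of `U` and `c ≤ h (x - z)` on `U`,
then `c ≤ ξ h`. -/
lemma aux_eval_ge (x : X) (U : Set X) (h : StrongDual ℝ X) (c : ℝ)
    (hU : ∀ z ∈ U, c ≤ h (x - z)) {ξ : WeakDual ℝ (StrongDual ℝ X)}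
    (hξ : ξ ∈ closure ((fun z => StrongDual.toWeakDual
        (NormedSpace.inclusionInDoubleDual ℝ X (x - z))) '' U)) :
    c ≤ ξ h := by
  have hclosed : IsClosed {ζ : WeakDual ℝ (StrongDual ℝ X) | c ≤ ζ h} :=
    isClosed_le continuous_const (WeakDual.eval_continuous h)
  have hsub : ((fun z => StrongDual.toWeakDual
      (NormedSpace.inclusionInDoubleDual ℝ X (x - z))) '' U) ⊆
      {ζ : WeakDual ℝ (StrongDual ℝ X) | c ≤ ζ h} := by
    rintro - ⟨z, hz, rfl⟩
    exact hU z hz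
  exact closure_minimal hsub hclosed hξ

lemma aux_eval_le (x : X) (U : Set X) (h : StrongDual ℝ X) (c : ℝ)
    (hU : ∀ z ∈ U, h (x - z) ≤ c) {ξ : WeakDual ℝ (StrongDual ℝ X)}
    (hξ : ξ ∈ closure ((fun z => StrongDual.toWeakDual
        (NormedSpace.inclusionInDoubleDual ℝ X (x - z))) '' U)) :
    ξ h ≤ c := by
  have hclosed : IsClosed {ζ : WeakDual ℝ (StrongDual ℝ X) | ζ h ≤ c} :=
    isClosed_le (WeakDual.eval_continuous h) continuous_const
  have hsub : ((fun z => StrongDual.toWeakDual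
      (NormedSpace.inclusionInDoubleDual ℝ X (x - z))) '' U) ⊆
      {ζ : WeakDual ℝ (StrongDual ℝ X) | ζ h ≤ c} := by
    rintro - ⟨z, hz, rfl⟩
    exact hU z hz
  exact closure_minimal hsub hclosed hξ

lemma aux_tendsto (d : ℝ) :
    Tendsto (fun n : ℕ => (1 - (2 : ℝ) ^ (-((n + 1 : ℕ) : ℤ))) * d) atTop (𝓝 d) := by
  have h0 : Tendsto (fun n : ℕ => ((2 : ℝ)⁻¹) ^ (n + 1)) atTop (𝓝 0) :=
    (tendsto_pow_atTop_nhds_zero_of_lt_one (by norm_num) (by norm_num)).comp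
      (tendsto_add_atTop_nat 1)
  have heq : ∀ n : ℕ, (2 : ℝ) ^ (-((n + 1 : ℕ) : ℤ)) = ((2 : ℝ)⁻¹) ^ (n + 1) := by
    intro n
    rw [zpow_neg, inv_pow, zpow_natCast]
  have : Tendsto (fun n : ℕ => (1 - (2 : ℝ) ^ (-((n + 1 : ℕ) : ℤ))) * d) atTop
      (𝓝 ((1 - 0) * d)) := by
    refine Tendsto.mul_const d (tendsto_const_nhds.sub ?_)
    simpa only [heq] using h0
  simpa using this

end Aux

set_option maxHeartbeats 1000000 in
/-- If `X` is a reflexive real Banach space and `C ⊆ X` is a nonempty closed set,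
then `Ω(C) = L(C)` where `L(C) = ⋂_{n ≥ 1} L_n(C)`. -/
theorem omegaSet_eq_iInter_LSet
    (X : Type*) [NormedAddCommGroup X] [NormedSpace ℝ X] [CompleteSpace X]
    (hrefl : IsReflexiveSpace X)
    (C : Set X) (hCclosed : IsClosed C) (hCne : C.Nonempty) :
    OmegaSet C = ⋂ n ∈ Set.Ici 1, LSet C n := by
  ext x
  simp only [OmegaSet, LSet, Set.mem_setOf_eq, Set.mem_iInter, Set.mem_Ici]
  constructor
  · rintro ⟨hxC, f, hf, hΩ⟩ n hn
    refine ⟨hxC, f, hf, ?_⟩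
    have hε : (0 : ℝ) < 2 ^ (-(n : ℤ)) := by positivity
    obtain ⟨δ, hδ, hs⟩ := hΩ _ hε
    have hbdd : BddAbove (Set.range fun δ : {δ : ℝ // 0 < δ} =>
        sInf ((fun z => f (x - z)) '' (C ∩ Metric.closedBall x (Metric.infDist x C + δ.1)))) := by
      refine ⟨Metric.infDist x C + 1, ?_⟩
      rintro - ⟨δ', rfl⟩
      exact aux_sInf_le hCne f hf x δ'.2
    exact lt_of_lt_of_le hs (le_ciSup hbdd ⟨δ, hδ⟩)
  · intro hL
    have hxC : x ∉ C := (hL 1 le_rfl).1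
    set d := Metric.infDist x C with hd
    have hd0 : 0 < d := (hCclosed.notMem_iff_infDist_pos hCne).1 hxC
    -- extract functionals and radii
    have key : ∀ n : ℕ, ∃ f : X →L[ℝ] ℝ, ‖f‖ = 1 ∧ ∃ δ : ℝ, 0 < δ ∧
        ∀ z ∈ C ∩ Metric.closedBall x (d + δ),
          (1 - (2 : ℝ) ^ (-((n + 1 : ℕ) : ℤ))) * d < f (x - z) := by
      intro n
      obtain ⟨-, f, hf, hsup⟩ := hL (n + 1) (by omega)
      refine ⟨f, hf, ?_⟩
      by_contra h'
      push_neg at h'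
      have hle : (⨆ δ : {δ : ℝ // 0 < δ},
          sInf ((fun z => f (x - z)) '' (C ∩ Metric.closedBall x (d + δ.1))))
          ≤ (1 - (2 : ℝ) ^ (-((n + 1 : ℕ) : ℤ))) * d := by
        refine ciSup_le fun δ => ?_
        obtain ⟨z, hz, hzle⟩ := h' δ.1 δ.2
        exact (csInf_le (aux_bddBelow f x C _) ⟨z, hz, rfl⟩).trans hzle
      exact absurd hsup (not_lt.2 hle)
    choose g hg δe hδe hge using key
    -- the nested family
    obtain ⟨ξ, hξmem, hξnorm⟩ := aux_nested x d
      (fun i => C ∩ Metric.closedBall x (d + i.1))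
      (fun i j hij => Set.inter_subset_inter_right _
        (Metric.closedBall_subset_closedBall (by linarith)))
      (fun i z hz => hz.2)
      (fun i => by
        obtain ⟨z, hz, -⟩ := aux_exists hCne x i.2.1
        exact ⟨z, hz⟩)
    -- the set D'
    set φ : X → WeakDual ℝ (StrongDual ℝ X) := fun v =>
      StrongDual.toWeakDual (NormedSpace.inclusionInDoubleDual ℝ X v) with hφ
    set D' : Set X := {w : X | ∀ i : {p : ℝ // 0 < p ∧ p ≤ 1},
      φ w ∈ closure ((fun z => φ (x - z)) '' (C ∩ Metric.closedBall x (d + i.1)))} with hD'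
    have hD'g : ∀ w ∈ D', ∀ n : ℕ, (1 - (2 : ℝ) ^ (-((n + 1 : ℕ) : ℤ))) * d ≤ g n w := by
      intro w hw n
      have hi : (0 : ℝ) < min (δe n) 1 := lt_min (hδe n) one_pos
      have hmem := hw ⟨min (δe n) 1, hi, min_le_right _ _⟩
      have := aux_eval_ge x (C ∩ Metric.closedBall x (d + min (δe n) 1)) (g n)
        ((1 - (2 : ℝ) ^ (-((n + 1 : ℕ) : ℤ))) * d) ?_ hmem
      · exact this
      · intro z hz
        refine (hge n z ⟨hz.1, ?_⟩).le
        exact Metric.closedBall_subset_closedBall (by linarith [min_le_left (δe n) 1]) hz.2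
    have hD'norm : ∀ w ∈ D', ‖w‖ ≤ d := by
      intro w hw
      have : ∀ i : {p : ℝ // 0 < p ∧ p ≤ 1}, ‖w‖ ≤ d + i.1 := by
        intro i
        have hmem := hw i
        have hsub : closure ((fun z => φ (x - z)) ''
            (C ∩ Metric.closedBall x (d + i.1))) ⊆
            WeakDual.toStrongDual ⁻¹' Metric.closedBall 0 (d + i.1) := by
          refine closure_minimal ?_ (WeakDual.isClosed_closedBall 0 _)
          rintro - ⟨z, hz, rfl⟩
          simp only [Set.mem_preimage, mem_closedBall_zero_iff]
          refine (mem_closedBall_zero_iff (a := WeakDual.toStrongDual (φ (x - z))) (r := d + i.1)).mpr ?_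
          have : ‖WeakDual.toStrongDual (φ (x - z))‖ = ‖x - z‖ :=
            (NormedSpace.inclusionInDoubleDualLi ℝ (E := X)).norm_map (x - z)
          rw [this, ← dist_eq_norm, dist_comm]
          exact hz.2
        have := hsub hmem
        simp only [Set.mem_preimage, mem_closedBall_zero_iff] at this
        replace this := (mem_closedBall_zero_iff (a := WeakDual.toStrongDual (φ w)) (r := d + i.1)).mp this
        have hnw : ‖WeakDual.toStrongDual (φ w)‖ = ‖w‖ :=
          (NormedSpace.inclusionInDoubleDualLi ℝ (E := X)).norm_map w
        rwa [hnw] at this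
      refine le_of_forall_pos_le_add fun ε hε => ?_
      exact (this ⟨min ε 1, lt_min hε one_pos, min_le_right _ _⟩).trans
        (by linarith [min_le_left ε 1])
    have hD'ne : D'.Nonempty := by
      obtain ⟨w, hw⟩ := hrefl (WeakDual.toStrongDual ξ)
      have hφw : φ w = ξ := by
        show StrongDual.toWeakDual (NormedSpace.inclusionInDoubleDual ℝ X w) = ξ
        rw [hw]; rfl
      refine ⟨w, fun i => ?_⟩
      rw [hφw]
      exact hξmem i
    -- the functional: nested compact family in the dual ball of `X*`
    set G : ℕ → Set (WeakDual ℝ X) := fun n =>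
      (WeakDual.toStrongDual ⁻¹' Metric.closedBall (0 : StrongDual ℝ X) 1) ∩
        {f : WeakDual ℝ X | ∀ w ∈ D', (1 - (2 : ℝ) ^ (-((n + 1 : ℕ) : ℤ))) * d ≤ f w} with hG
    have hGclosed : ∀ n, IsClosed (G n) := by
      intro n
      refine (WeakDual.isClosed_closedBall 0 1).inter ?_
      have : {f : WeakDual ℝ X | ∀ w ∈ D', (1 - (2 : ℝ) ^ (-((n + 1 : ℕ) : ℤ))) * d ≤ f w}
          = ⋂ w ∈ D', {f : WeakDual ℝ X | (1 - (2 : ℝ) ^ (-((n + 1 : ℕ) : ℤ))) * d ≤ f w} := by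
        ext f; simp [Set.mem_iInter]
      rw [this]
      exact isClosed_biInter fun w _ =>
        isClosed_le continuous_const (WeakDual.eval_continuous w)
    have hGcomp : ∀ n, IsCompact (G n) := fun n =>
      (WeakDual.isCompact_closedBall (𝕜 := ℝ) 0 1).of_isClosed_subset (hGclosed n)
        Set.inter_subset_left
    have hGne : ∀ n, (G n).Nonempty := by
      intro n
      refine ⟨StrongDual.toWeakDual (g n), ?_, ?_⟩
      · simp only [Set.mem_preimage, mem_closedBall_zero_iff]
        have : WeakDual.toStrongDual (StrongDual.toWeakDual (g n)) = g n := rfl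
        rw [this, hg n]
      · intro w hw
        exact hD'g w hw n
    have hGmono : ∀ m n : ℕ, m ≤ n → G n ⊆ G m := by
      intro m n hmn
      refine Set.inter_subset_inter_right _ ?_
      intro f hf w hw
      refine le_trans ?_ (hf w hw)
      have h2 : (2 : ℝ) ^ (-((n + 1 : ℕ) : ℤ)) ≤ (2 : ℝ) ^ (-((m + 1 : ℕ) : ℤ)) := by
        apply zpow_le_zpow_right₀ (by norm_num)
        omega
      nlinarith [hd0.le]
    have hGdir : Directed (· ⊇ ·) G := fun m n =>
      ⟨max m n, hGmono m (max m n) (le_max_left _ _), hGmono n (max m n) (le_max_right _ _)⟩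
    obtain ⟨F, hF⟩ := IsCompact.nonempty_iInter_of_directed_nonempty_isCompact_isClosed
      G hGdir hGne hGcomp hGclosed
    rw [Set.mem_iInter] at hF
    set f₀ : StrongDual ℝ X := WeakDual.toStrongDual F with hf₀
    have hf₀b : ‖f₀‖ ≤ 1 := by
      have := (hF 0).1
      exact (mem_closedBall_zero_iff (a := WeakDual.toStrongDual F) (r := 1)).mp this
    have hf₀D : ∀ w ∈ D', d ≤ f₀ w := by
      intro w hw
      refine le_of_tendsto (aux_tendsto d) (Eventually.of_forall fun n => ?_)
      exact (hF n).2 w hw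
    have hf₀1 : ‖f₀‖ = 1 := by
      obtain ⟨w₀, hw₀⟩ := hD'ne
      have h1 : d ≤ f₀ w₀ := hf₀D w₀ hw₀
      have h2 : f₀ w₀ ≤ ‖f₀‖ * d := by
        calc f₀ w₀ ≤ |f₀ w₀| := le_abs_self _
          _ ≤ ‖f₀‖ * ‖w₀‖ := f₀.le_opNorm _
          _ ≤ ‖f₀‖ * d := mul_le_mul_of_nonneg_left (hD'norm w₀ hw₀) (norm_nonneg _)
      have : 1 ≤ ‖f₀‖ := by nlinarith
      linarith
    refine ⟨hxC, f₀, hf₀1, ?_⟩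
    intro ε hε
    by_contra h'
    push_neg at h'
    set c' : ℝ := (1 - ε) * d + (ε / 2) * d with hc'
    have hc'd : c' < d := by rw [hc']; nlinarith
    have hbad : ∀ i : {p : ℝ // 0 < p ∧ p ≤ 1},
        ∃ z ∈ C ∩ Metric.closedBall x (d + i.1), f₀ (x - z) ≤ c' := by
      intro i
      have hs := h' i.1 i.2.1
      have hne := aux_nonempty hCne f₀ x i.2.1
      have hlt : sInf ((fun z => f₀ (x - z)) '' (C ∩ Metric.closedBall x (d + i.1))) < c' := by
        have hpos : (0 : ℝ) < (ε / 2) * d := by positivity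
        rw [hc']
        linarith
      obtain ⟨y, ⟨z, hz, rfl⟩, hy⟩ := exists_lt_of_csInf_lt hne hlt
      exact ⟨z, hz, hy.le⟩
    obtain ⟨η, hηmem, -⟩ := aux_nested x d
      (fun i => {z | z ∈ C ∩ Metric.closedBall x (d + i.1) ∧ f₀ (x - z) ≤ c'})
      (fun i j hij z hz => ⟨⟨hz.1.1,
        Metric.closedBall_subset_closedBall (by linarith) hz.1.2⟩, hz.2⟩)
      (fun i z hz => hz.1.2)
      (fun i => by obtain ⟨z, hz, hzle⟩ := hbad i; exact ⟨z, hz, hzle⟩)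
    obtain ⟨w', hw'⟩ := hrefl (WeakDual.toStrongDual η)
    have hφw' : φ w' = η := by
      show StrongDual.toWeakDual (NormedSpace.inclusionInDoubleDual ℝ X w') = η
      rw [hw']; rfl
    have hw'D : w' ∈ D' := by
      intro i
      rw [hφw']
      refine closure_mono (Set.image_mono ?_) (hηmem i)
      intro z hz
      exact hz.1
    have hup : η f₀ ≤ c' := by
      refine aux_eval_le x _ f₀ c' ?_ (hηmem ⟨1, one_pos, le_rfl⟩)
      intro z hz
      exact hz.2
    have hlow : d ≤ f₀ w' := hf₀D w' hw'D
    have hval : η f₀ = f₀ w' := by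
      rw [← hφw']
      rfl
    rw [hval] at hup
    linarith
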